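/- The triple product integral of orthonormal probabilists' Hermite polynomials ∫_ℝ H_k(y) H_l(y) H_m(y) exp(-y²/2)/sqrt(2π) dy vanishes unless k+l+m is even and |k-l| ≤ m ≤ k+l, in which case it equals [C(k, g-m) C(l, g-m) C(m, g-k)]^{1/2} where g = (k+l+m)/2. -/

import Mathlib

open MeasureTheory Real Filter

/-- The `n`-th orthonormal probabilists' Hermite polynomial. -/
noncomputable def H (n : ℕ) : ℝ → ℝ := fun y =>
  ((-1 : ℝ) ^ n / Real.sqrt n.factorial) * Real.exp (y ^ 2 / 2) *
    iteratedDeriv n (fun t : ℝ => Real.exp (-t ^ 2 / 2)) y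

/-- Standard Gaussian density. -/
noncomputable def gauss : ℝ → ℝ := fun y => Real.exp (-y ^ 2 / 2) / Real.sqrt (2 * Real.pi)


noncomputable section
namespace HTP
open Polynomial

/-- Real Hermite polynomial. -/
def hR (n : ℕ) : ℝ[X] := (Polynomial.hermite n).map (algebraMap ℤ ℝ)

lemma hR_zero : hR 0 = 1 := by simp [hR, Polynomial.hermite_zero]

lemma hR_one : hR 1 = X := by simp [hR, Polynomial.hermite_one]

lemma hR_succ (n : ℕ) : hR (n + 1) = X * hR n - derivative (hR n) := by
  simp [hR, Polynomial.hermite_succ, Polynomial.derivative_map]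

lemma derivative_hR (n : ℕ) : derivative (hR n) = C (n : ℝ) * hR (n - 1) := by
  induction n with
  | zero => simp [hR_zero]
  | succ n ih =>
    rw [hR_succ, derivative_sub, derivative_mul, derivative_X, one_mul, ih,
      derivative_mul, derivative_C, zero_mul, zero_add]
    cases n with
    | zero => simp [hR_zero, hR_one]
    | succ n =>
      rw [Nat.succ_sub_one] at ih ⊢
      have hC : (C ((n + 1 + 1 : ℕ) : ℝ) : ℝ[X]) = C ((n + 1 : ℕ) : ℝ) + 1 := by
        push_cast; rw [map_add, map_one]
      rw [hC, Nat.succ_sub_one, hR_succ]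
      ring

/-- Gaussian kernel. -/
def e : ℝ → ℝ := fun x => Real.exp (-x ^ 2 / 2)

lemma e_pos (x : ℝ) : 0 < e x := Real.exp_pos _

lemma continuous_e : Continuous e := by
  unfold e; fun_prop

lemma abs_pow_le (n : ℕ) (x : ℝ) : |x| ^ n ≤ n.factorial * Real.exp |x| := by
  have h1 : |x| ^ n / n.factorial ≤ Real.exp |x| := by
    calc |x| ^ n / n.factorial
        ≤ ∑ i ∈ Finset.range (n + 1), |x| ^ i / i.factorial := by
          refine Finset.single_le_sum (f := fun i => |x| ^ i / i.factorial) ?_ ?_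
          · intro i _; positivity
          · simp
      _ ≤ Real.exp |x| := Real.sum_le_exp_of_nonneg (abs_nonneg x) _
  have h2 : (0:ℝ) < n.factorial := by exact_mod_cast n.factorial_pos
  calc |x| ^ n = |x| ^ n / n.factorial * n.factorial := by field_simp
    _ ≤ Real.exp |x| * n.factorial := by
        exact mul_le_mul_of_nonneg_right h1 h2.le
    _ = n.factorial * Real.exp |x| := by ring

lemma integrable_pow_e (n : ℕ) : Integrable fun x : ℝ => x ^ n * e x := by
  apply Integrable.mono' (g := fun x : ℝ =>
      (n.factorial * Real.exp 1) * Real.exp (-(1/4 : ℝ) * x ^ 2))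
  · exact (integrable_exp_neg_mul_sq (by norm_num : (0:ℝ) < 1/4)).const_mul _
  · exact (Continuous.mul (continuous_pow n) continuous_e).aestronglyMeasurable
  · refine Filter.Eventually.of_forall fun x => ?_
    have hfac : (0:ℝ) ≤ n.factorial := by positivity
    have h1 : ‖x ^ n * e x‖ = |x| ^ n * e x := by
      rw [norm_mul, Real.norm_eq_abs, Real.norm_eq_abs, abs_pow,
        abs_of_pos (e_pos x)]
    rw [h1]
    calc |x| ^ n * e x ≤ (n.factorial * Real.exp |x|) * e x :=
          mul_le_mul_of_nonneg_right (abs_pow_le n x) (e_pos x).le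
      _ = n.factorial * Real.exp (|x| + -x ^ 2 / 2) := by
          rw [Real.exp_add]; unfold e; ring
      _ ≤ n.factorial * Real.exp (1 + -(1/4) * x ^ 2) := by
          refine mul_le_mul_of_nonneg_left (Real.exp_le_exp.2 ?_) hfac
          nlinarith [sq_nonneg (|x| - 2), sq_abs x]
      _ = n.factorial * Real.exp 1 * Real.exp (-(1/4 : ℝ) * x ^ 2) := by
          rw [Real.exp_add]; ring

lemma integrable_eval_e (P : ℝ[X]) : Integrable fun x : ℝ => eval x P * e x := by
  induction P using Polynomial.induction_on' with
  | add p q hp hq =>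
    have : (fun x : ℝ => eval x (p + q) * e x)
        = fun x => eval x p * e x + eval x q * e x := by
      funext x; simp [add_mul]
    rw [this]; exact hp.add hq
  | monomial n a =>
    have : (fun x : ℝ => eval x (monomial n a) * e x)
        = fun x => a * (x ^ n * e x) := by
      funext x; simp [eval_monomial]; ring
    rw [this]; exact (integrable_pow_e n).const_mul a

lemma hasDerivAt_eval_e (F : ℝ[X]) (x : ℝ) :
    HasDerivAt (fun t => eval t F * e t) (eval x (derivative F - X * F) * e x) x := by
  have h1 : HasDerivAt (fun t : ℝ => -t ^ 2 / 2) (-x) x := by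
    have := ((hasDerivAt_pow 2 x).neg).div_const 2
    exact this.congr_deriv (by norm_num; ring)
  have h2 : HasDerivAt e (-x * e x) x := by
    have := h1.exp
    exact this.congr_deriv (by unfold e; ring)
  have h3 := (F.hasDerivAt x).mul h2
  exact h3.congr_deriv (by
  simp only [eval_sub, eval_mul, eval_X]
  unfold e; ring)

lemma ibp (P : ℝ[X]) (n : ℕ) :
    (∫ x : ℝ, eval x (P * hR (n + 1)) * e x)
      = ∫ x : ℝ, eval x (derivative P * hR n) * e x := by
  set F := P * hR n with hF
  have h0 : (∫ x : ℝ, eval x (derivative F - X * F) * e x) = 0 :=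
    integral_eq_zero_of_hasDerivAt_of_integrable (hasDerivAt_eval_e F)
      (integrable_eval_e _) (integrable_eval_e _)
  have hpoly : derivative F - X * F = derivative P * hR n - P * hR (n + 1) := by
    rw [hF, derivative_mul, hR_succ]; ring
  rw [hpoly] at h0
  have hsplit : (fun x : ℝ => eval x (derivative P * hR n - P * hR (n + 1)) * e x)
      = fun x => eval x (derivative P * hR n) * e x - eval x (P * hR (n + 1)) * e x := by
    funext x; simp [sub_mul]
  rw [hsplit, integral_sub (integrable_eval_e _) (integrable_eval_e _)] at h0
  linarith

lemma int_one : (∫ x : ℝ, eval x (1 : ℝ[X]) * e x) = Real.sqrt (2 * π) := by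
  have h := integral_gaussian (1/2 : ℝ)
  have h2 : (fun x : ℝ => eval x (1 : ℝ[X]) * e x) = fun x => Real.exp (-(1/2) * x ^ 2) := by
    funext x; unfold e; rw [eval_one, one_mul]; ring_nf
  rw [h2, h, show (π / (1/2 : ℝ)) = 2 * π from by ring]

end HTP
section
open Polynomial HTP
namespace HTP

lemma ortho : ∀ l k : ℕ, (∫ x : ℝ, eval x (hR k * hR l) * e x)
    = if k = l then (k.factorial : ℝ) * Real.sqrt (2 * π) else 0 := by
  intro l
  induction l with
  | zero =>
    intro k
    cases k with
    | zero =>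
      rw [hR_zero, mul_one, if_pos rfl]
      have := int_one
      simpa using this
    | succ j =>
      rw [hR_zero, mul_one, if_neg (Nat.succ_ne_zero j), ← one_mul (hR (j+1)), ibp]
      simp
  | succ l ih =>
    intro k
    rw [ibp, derivative_hR]
    have hfun : (fun x : ℝ => eval x (C (k:ℝ) * hR (k-1) * hR l) * e x)
        = fun x => (k:ℝ) * (eval x (hR (k-1) * hR l) * e x) := by
      funext x; simp only [eval_mul, eval_C]; ring
    rw [hfun, integral_const_mul, ih]
    cases k with
    | zero => simp
    | succ j =>
      simp only [Nat.add_sub_cancel]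
      rcases eq_or_ne j l with rfl | hne
      · rw [if_pos rfl, if_pos rfl, Nat.factorial_succ]
        push_cast
        ring
      · rw [if_neg (by simpa using hne), if_neg (by simpa using hne), mul_zero]

/-- The triple product integral of monic Hermite polynomials. -/
def T (k l m : ℕ) : ℝ := ∫ x : ℝ, eval x (hR k * hR l * hR m) * e x

lemma T_zero (k l : ℕ) :
    T k l 0 = if k = l then (k.factorial : ℝ) * Real.sqrt (2 * π) else 0 := by
  rw [T, hR_zero, mul_one, ortho]

lemma T_succ (k l m : ℕ) :
    T k l (m + 1) = k * T (k-1) l m + l * T k (l-1) m := by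
  rw [T, ibp]
  have hpoly : derivative (hR k * hR l) * hR m
      = C (k:ℝ) * (hR (k-1) * hR l * hR m) + C (l:ℝ) * (hR k * hR (l-1) * hR m) := by
    rw [derivative_mul, derivative_hR, derivative_hR]; ring
  rw [hpoly]
  have hfun : (fun x : ℝ => eval x
        (C (k:ℝ) * (hR (k-1) * hR l * hR m) + C (l:ℝ) * (hR k * hR (l-1) * hR m)) * e x)
      = fun x => (k:ℝ) * (eval x (hR (k-1) * hR l * hR m) * e x)
          + (l:ℝ) * (eval x (hR k * hR (l-1) * hR m) * e x) := by
    funext x; simp only [eval_add, eval_mul, eval_C]; ring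
  rw [hfun, integral_add (((integrable_eval_e _)).const_mul _)
    (((integrable_eval_e _)).const_mul _), integral_const_mul, integral_const_mul]
  rfl

end HTP
end
namespace HTP

/-- Condition for nonvanishing. -/
def cond (k l m : ℕ) : Prop := Even (k + l + m) ∧ k - l ≤ m ∧ l - k ≤ m ∧ m ≤ k + l

lemma cond_iff_arith (k l m : ℕ) :
    cond k l m ↔ ((k + l + m) % 2 = 0 ∧ k ≤ l + m ∧ l ≤ k + m ∧ m ≤ k + l) := by
  rw [cond, Nat.even_iff]
  omega

instance (k l m : ℕ) : Decidable (cond k l m) :=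
  decidable_of_iff _ (cond_iff_arith k l m).symm

lemma cond_iff_abc (k l m : ℕ) :
    cond k l m ↔ ∃ a b c : ℕ, k = b + c ∧ l = a + c ∧ m = a + b := by
  rw [cond_iff_arith]
  constructor
  · rintro ⟨h0, h1, h2, h3⟩
    exact ⟨(l + m - k) / 2, (k + m - l) / 2, (k + l - m) / 2, by omega, by omega, by omega⟩
  · rintro ⟨a, b, c, rfl, rfl, rfl⟩
    omega

/-- The unnormalized value in `a b c` coordinates. -/
def M (a b c : ℕ) : ℕ :=
  (b + c).choose c * (a + c).choose c * (a + b).choose a *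
    (a.factorial * (b.factorial * c.factorial))

/-- The unnormalized triple-product value. -/
def Nn (k l m : ℕ) : ℕ :=
  k.choose ((k + l + m) / 2 - m) * l.choose ((k + l + m) / 2 - m) *
    m.choose ((k + l + m) / 2 - k) *
    (((k + l + m) / 2 - k).factorial * (((k + l + m) / 2 - l).factorial *
      ((k + l + m) / 2 - m).factorial))

lemma Nn_eq {k l m a b c : ℕ} (hk : k = b + c) (hl : l = a + c) (hm : m = a + b) :
    Nn k l m = M a b c := by
  subst hk hl hm
  rw [Nn, M, show (b + c + (a + c) + (a + b)) / 2 = a + b + c by omega,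
    show a + b + c - (a + b) = c by omega, show a + b + c - (b + c) = a by omega,
    show a + b + c - (a + c) = b by omega]

lemma fact_ne (n : ℕ) : ((n.factorial : ℝ)) ≠ 0 := by
  exact_mod_cast n.factorial_ne_zero

lemma M_cast (a b c : ℕ) : (M a b c : ℝ) =
    ((b + c).factorial * (a + c).factorial * (a + b).factorial) /
      (a.factorial * b.factorial * c.factorial) := by
  have h1 := Nat.cast_choose ℝ (Nat.le_add_left c b)
  have h2 := Nat.cast_choose ℝ (Nat.le_add_left c a)
  have h3 := Nat.cast_choose ℝ (Nat.le_add_right a b)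
  rw [Nat.add_sub_cancel] at h1 h2
  rw [Nat.add_sub_cancel_left] at h3
  rw [M]
  push_cast
  rw [h1, h2, h3]
  field_simp

lemma M_rec (a b c : ℕ) : (M (a+1) (b+1) c : ℝ)
    = (b + 1 + c) * M (a+1) b c + (a + 1 + c) * M a (b+1) c := by
  rw [M_cast, M_cast, M_cast,
    show b + 1 + c = (b + c) + 1 by omega, show a + 1 + c = (a + c) + 1 by omega,
    show a + 1 + (b + 1) = (a + b) + 1 + 1 by omega,
    show a + 1 + b = (a + b) + 1 by omega, show a + (b + 1) = (a + b) + 1 by omega,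
    Nat.factorial_succ ((a+b)+1), Nat.factorial_succ (a+b), Nat.factorial_succ (b+c),
    Nat.factorial_succ (a+c), Nat.factorial_succ a, Nat.factorial_succ b]
  have ha := fact_ne a
  have hb := fact_ne b
  have hc := fact_ne c
  have hab := fact_ne (a+b)
  have hac := fact_ne (a+c)
  have hbc := fact_ne (b+c)
  push_cast
  field_simp
  ring

lemma M_rec0 (a c : ℕ) : (M (a+1) 0 c : ℝ) = (a + 1 + c) * M a 0 c := by
  rw [M_cast, M_cast, show a + 1 + c = (a + c) + 1 by omega,
    Nat.factorial_succ (a+c), Nat.factorial_succ a]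
  have ha := fact_ne a
  have hc := fact_ne c
  have hac := fact_ne (a+c)
  push_cast
  field_simp
  ring

lemma M_comm (a b c : ℕ) : M a b c = M b a c := by
  rw [M, M, Nat.add_comm b a, Nat.choose_symm_add]
  ring

lemma M_rec0' (b c : ℕ) : (M 0 (b+1) c : ℝ) = (b + 1 + c) * M 0 b c := by
  rw [M_comm 0 (b+1) c, M_comm 0 b c]
  exact M_rec0 b c

lemma key (k l m : ℕ) :
    (if cond k l (m+1) then (Nn k l (m+1) : ℝ) else 0)
      = k * (if cond (k-1) l m then (Nn (k-1) l m : ℝ) else 0)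
        + l * (if cond k (l-1) m then (Nn k (l-1) m : ℝ) else 0) := by
  by_cases hc : cond k l (m+1)
  · rw [if_pos hc]
    obtain ⟨a, b, c, hk, hl, hm⟩ := (cond_iff_abc k l (m+1)).1 hc
    rw [Nn_eq hk hl hm]
    match b, hk, hm with
    | 0, hk, hm =>
      -- b = 0 : k = c, a = m + 1
      have ha : a = m + 1 := by omega
      have h1 : ¬ cond (k-1) l m := by rw [cond_iff_arith]; omega
      have h2 : cond k (l-1) m := (cond_iff_abc _ _ _).2 ⟨m, 0, c, by omega, by omega, by omega⟩
      rw [if_neg h1, if_pos h2,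
        Nn_eq (show k = 0 + c by omega) (show l - 1 = m + c by omega) (show m = m + 0 by omega)]
      have hl' : (l : ℝ) = (m : ℝ) + 1 + c := by exact_mod_cast congrArg (Nat.cast (R := ℝ)) (by omega : l = m + 1 + c)
      rw [ha, hl', mul_zero, M_rec0]
      ring
    | b + 1, hk, hm =>
      match a, hl, hm with
      | 0, hl, hm =>
        have hb : b + 1 = m + 1 := by omega
        have h2 : ¬ cond k (l-1) m := by rw [cond_iff_arith]; omega
        have h1 : cond (k-1) l m := (cond_iff_abc _ _ _).2 ⟨0, m, c, by omega, by omega, by omega⟩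
        rw [if_neg h2, if_pos h1,
          Nn_eq (show k - 1 = m + c by omega) (show l = 0 + c by omega) (show m = 0 + m by omega)]
        have hk' : (k : ℝ) = (m : ℝ) + 1 + c := by exact_mod_cast congrArg (Nat.cast (R := ℝ)) (by omega : k = m + 1 + c)
        have hb' : b = m := by omega
        rw [hb', hk', mul_zero, M_rec0']
        ring
      | a + 1, hl, hm =>
        have h1 : cond (k-1) l m := (cond_iff_abc _ _ _).2 ⟨a + 1, b, c, by omega, by omega, by omega⟩
        have h2 : cond k (l-1) m := (cond_iff_abc _ _ _).2 ⟨a, b + 1, c, by omega, by omega, by omega⟩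
        rw [if_pos h1, if_pos h2,
          Nn_eq (show k - 1 = b + c by omega) (show l = (a+1) + c by omega) (show m = (a+1) + b by omega),
          Nn_eq (show k = (b+1) + c by omega) (show l - 1 = a + c by omega) (show m = a + (b+1) by omega)]
        have hk' : (k : ℝ) = (b : ℝ) + 1 + c := by exact_mod_cast congrArg (Nat.cast (R := ℝ)) (by omega : k = b + 1 + c)
        have hl' : (l : ℝ) = (a : ℝ) + 1 + c := by exact_mod_cast congrArg (Nat.cast (R := ℝ)) (by omega : l = a + 1 + c)
        rw [hk', hl', M_rec]
  · rw [if_neg hc]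
    have h1 : (k : ℝ) * (if cond (k-1) l m then (Nn (k-1) l m : ℝ) else 0) = 0 := by
      cases k with
      | zero => simp
      | succ j =>
        rw [if_neg, mul_zero]
        intro h
        exact hc (by rw [cond_iff_arith] at h ⊢; omega)
    have h2 : (l : ℝ) * (if cond k (l-1) m then (Nn k (l-1) m : ℝ) else 0) = 0 := by
      cases l with
      | zero => simp
      | succ j =>
        rw [if_neg, mul_zero]
        intro h
        exact hc (by rw [cond_iff_arith] at h ⊢; omega)
    rw [h1, h2, add_zero]

lemma Nn_sq {k l m : ℕ} (hc : cond k l m) :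
    (k.choose ((k + l + m) / 2 - m) * l.choose ((k + l + m) / 2 - m) *
      m.choose ((k + l + m) / 2 - k)) * (k.factorial * l.factorial * m.factorial)
      = (Nn k l m) ^ 2 := by
  obtain ⟨a, b, c, hk, hl, hm⟩ := (cond_iff_abc k l m).1 hc
  subst hk hl hm
  rw [Nn, show (b + c + (a + c) + (a + b)) / 2 = a + b + c by omega,
    show a + b + c - (a + b) = c by omega, show a + b + c - (b + c) = a by omega,
    show a + b + c - (a + c) = b by omega]
  have h1 := Nat.choose_mul_factorial_mul_factorial (Nat.le_add_left c b)
  have h2 := Nat.choose_mul_factorial_mul_factorial (Nat.le_add_left c a)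
  have h3 := Nat.choose_mul_factorial_mul_factorial (Nat.le_add_right a b)
  rw [Nat.add_sub_cancel] at h1 h2
  rw [Nat.add_sub_cancel_left] at h3
  rw [← h1, ← h2, ← h3]
  ring

end HTP
namespace HTP

lemma T_closed : ∀ m k l : ℕ,
    T k l m = (if cond k l m then (Nn k l m : ℝ) else 0) * Real.sqrt (2 * π) := by
  intro m
  induction m with
  | zero =>
    intro k l
    rw [T_zero]
    rcases eq_or_ne k l with rfl | hne
    · rw [if_pos rfl, if_pos (by rw [cond_iff_arith]; omega)]
      congr 2
      rw [Nn, show (k + k + 0) / 2 = k by omega]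
      simp
    · rw [if_neg hne, if_neg (by rw [cond_iff_arith]; omega), zero_mul]
  | succ m ih =>
    intro k l
    rw [T_succ, ih, ih, key]
    ring

end HTP

section Main
open Polynomial HTP

lemma H_eq (n : ℕ) (y : ℝ) : H n y = eval y (hR n) / Real.sqrt n.factorial := by
  have hfun : (fun t : ℝ => Real.exp (-t ^ 2 / 2)) = fun t => Real.exp (-(t ^ 2 / 2)) := by
    funext t; rw [neg_div]
  have heval : eval y (hR n) = Polynomial.aeval y (Polynomial.hermite n) := by
    rw [hR, eval_map, aeval_def]
  rw [H, hfun, iteratedDeriv_eq_iterate,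
    Polynomial.deriv_gaussian_eq_hermite_mul_gaussian n y, heval]
  have hpow : (-1 : ℝ) ^ n * (-1) ^ n = 1 := by
    rw [← pow_add]
    exact Even.neg_one_pow ⟨n, rfl⟩
  rw [show (-1 : ℝ) ^ n / Real.sqrt n.factorial * Real.exp (y ^ 2 / 2) *
      ((-1) ^ n * (Polynomial.aeval y) (Polynomial.hermite n) * Real.exp (-(y ^ 2 / 2)))
      = ((-1 : ℝ) ^ n * (-1) ^ n) * (Real.exp (y ^ 2 / 2) * Real.exp (-(y ^ 2 / 2))) *
        ((Polynomial.aeval y) (Polynomial.hermite n) / Real.sqrt n.factorial) from by ring,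
    hpow, ← Real.exp_add]
  simp

theorem hermite_triple_product_integral' (k l m : ℕ) :
    (∫ y : ℝ, H k y * H l y * H m y * gauss y) =
      if Even (k + l + m) ∧ k - l ≤ m ∧ l - k ≤ m ∧ m ≤ k + l then
        Real.sqrt ((k.choose ((k + l + m) / 2 - m) : ℝ) *
          (l.choose ((k + l + m) / 2 - m) : ℝ) * (m.choose ((k + l + m) / 2 - k) : ℝ))
      else 0 := by
  have hs1 : Real.sqrt (k.factorial : ℝ) ≠ 0 := by positivity
  have hs2 : Real.sqrt (l.factorial : ℝ) ≠ 0 := by positivity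
  have hs3 : Real.sqrt (m.factorial : ℝ) ≠ 0 := by positivity
  have hs4 : Real.sqrt (2 * π) ≠ 0 := by positivity
  have hfun : (fun y : ℝ => H k y * H l y * H m y * gauss y)
      = fun y => eval y (hR k * hR l * hR m) * e y *
          (Real.sqrt k.factorial * Real.sqrt l.factorial * Real.sqrt m.factorial *
            Real.sqrt (2 * π))⁻¹ := by
    funext y
    rw [H_eq, H_eq, H_eq]
    simp only [gauss, e, eval_mul, div_eq_mul_inv, mul_inv]
    ring
  rw [hfun, integral_mul_const]
  have hT := T_closed m k l
  unfold T at hT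
  rw [hT]
  by_cases hc : HTP.cond k l m
  · have hc' : Even (k + l + m) ∧ k - l ≤ m ∧ l - k ≤ m ∧ m ≤ k + l := hc
    rw [if_pos hc, if_pos hc']
    set B : ℝ := (k.choose ((k + l + m) / 2 - m) : ℝ) *
      (l.choose ((k + l + m) / 2 - m) : ℝ) * (m.choose ((k + l + m) / 2 - k) : ℝ) with hBdef
    have hBnn : (0:ℝ) ≤ B := by positivity
    have hcast : B * ((k.factorial : ℝ) * (l.factorial : ℝ) * (m.factorial : ℝ))
        = ((Nn k l m : ℝ)) ^ 2 := by
      rw [hBdef]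
      exact_mod_cast Nn_sq hc
    have hB : Real.sqrt B * (Real.sqrt k.factorial * Real.sqrt l.factorial *
        Real.sqrt m.factorial) = (Nn k l m : ℝ) := by
      rw [← Real.sqrt_mul (by positivity : (0:ℝ) ≤ (k.factorial : ℝ)) (l.factorial : ℝ),
        ← Real.sqrt_mul (by positivity) (m.factorial : ℝ),
        ← Real.sqrt_mul hBnn]
      rw [show (k.factorial : ℝ) * (l.factorial : ℝ) * (m.factorial : ℝ)
          = (k.factorial : ℝ) * ((l.factorial : ℝ) * (m.factorial : ℝ)) from by ring] at hcast ⊢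
      rw [show B * ((k.factorial : ℝ) * ((l.factorial : ℝ) * (m.factorial : ℝ)))
          = ((Nn k l m : ℝ)) ^ 2 from hcast, Real.sqrt_sq (by positivity)]
    rw [← hB]
    field_simp
  · have hc' : ¬(Even (k + l + m) ∧ k - l ≤ m ∧ l - k ≤ m ∧ m ≤ k + l) := hc
    rw [if_neg hc, if_neg hc']
    simp

end Main

theorem hermite_triple_product_integral (k l m : ℕ) :
    (∫ y : ℝ, H k y * H l y * H m y * gauss y) =
      if Even (k + l + m) ∧ k - l ≤ m ∧ l - k ≤ m ∧ m ≤ k + l then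
        Real.sqrt ((k.choose ((k + l + m) / 2 - m) : ℝ) *
          (l.choose ((k + l + m) / 2 - m) : ℝ) * (m.choose ((k + l + m) / 2 - k) : ℝ))
      else 0 :=
  hermite_triple_product_integral' k l m
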